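/- Let M be a matrix with entries in {−1, 0, 1}, having n columns and rank n−1. Then there is a nonzero integer vector h ∈ ℤⁿ with M h = 0 and ‖h‖_∞ ≤ n^{n−1}. -/

import Mathlib

open Matrix Submodule

/-- A square matrix whose rows lie in a submodule of too-small rank has zero determinant. -/
lemma det_eq_zero_of_rows_mem {K : Type*} [Field K] {k : ℕ}
    (N : Matrix (Fin (k+1)) (Fin (k+1)) K) (W : Submodule K (Fin (k+1) → K))
    (hW : Module.finrank K W ≤ k) (hrows : ∀ i, N i ∈ W) : N.det = 0 := by
  by_contra hdet
  have hunit : IsUnit N := (Matrix.isUnit_iff_isUnit_det N).mpr (isUnit_iff_ne_zero.mpr hdet)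
  have hli : LinearIndependent K (fun i => N i) :=
    Matrix.linearIndependent_rows_iff_isUnit.mpr hunit
  have hli' : LinearIndependent K (fun i => (⟨N i, hrows i⟩ : W)) := by
    apply LinearIndependent.of_comp W.subtype
    exact hli
  have hc := hli'.fintype_card_le_finrank
  simp only [Fintype.card_fin] at hc
  omega

/-- A `k × (k+1)` matrix with linearly independent rows has a nonzero maximal minor. -/
lemma exists_minor_ne_zero {K : Type*} [Field K] {k : ℕ}
    (B : Matrix (Fin k) (Fin (k+1)) K) (hli : LinearIndependent K (fun i => B i)) :
    ∃ j : Fin (k+1), (B.submatrix id j.succAbove).det ≠ 0 := by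
  classical
  have hrank : B.rank = k := by
    have := hli.rank_matrix
    simpa using this
  -- columns span ⊤ in K^k
  have hspan : Submodule.span K (Set.range Bᵀ) = ⊤ := by
    have h1 : Module.finrank K (Submodule.span K (Set.range Bᵀ)) = k := by
      have := B.rank_eq_finrank_span_cols
      rw [hrank] at this; exact this.symm
    apply Submodule.eq_top_of_finrank_eq
    rw [h1]; simp [Module.finrank_fintype_fun_eq_card]
  -- columns are not linearly independent (k+1 vectors in dim k)
  have hnli : ¬ LinearIndependent K (fun j => Bᵀ j) := by
    intro h
    have := h.fintype_card_le_finrank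
    simp [Module.finrank_fintype_fun_eq_card] at this
  obtain ⟨c, hsum, j₀, hj₀⟩ := Fintype.not_linearIndependent_iff.mp hnli
  refine ⟨j₀, ?_⟩
  -- column j₀ is in the span of the others
  have hmem : Bᵀ j₀ ∈ Submodule.span K (Set.range (fun a : Fin k => Bᵀ (j₀.succAbove a))) := by
    have hsum' : c j₀ • Bᵀ j₀ + ∑ j ∈ Finset.univ.erase j₀, c j • Bᵀ j = 0 := by
      rw [← Finset.add_sum_erase _ _ (Finset.mem_univ j₀)] at hsum
      exact hsum
    have : Bᵀ j₀ = (-(c j₀)⁻¹) • ∑ j ∈ Finset.univ.erase j₀, c j • Bᵀ j := by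
      have h1 := eq_neg_of_add_eq_zero_left hsum'
      have h2 := congrArg (fun v => (c j₀)⁻¹ • v) h1
      simp only [smul_smul, inv_mul_cancel₀ hj₀, one_smul, smul_neg] at h2
      rw [h2, neg_smul]
    rw [this]
    apply Submodule.smul_mem
    apply Submodule.sum_mem
    intro j hj
    apply Submodule.smul_mem
    apply Submodule.subset_span
    have hjne : j ≠ j₀ := Finset.ne_of_mem_erase hj
    obtain ⟨a, ha⟩ := Fin.exists_succAbove_eq hjne
    exact ⟨a, by show Bᵀ (j₀.succAbove a) = Bᵀ j; rw [ha]⟩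
  -- the other columns still span ⊤
  have hspan' : ⊤ ≤ Submodule.span K (Set.range (fun a : Fin k => Bᵀ (j₀.succAbove a))) := by
    rw [← hspan]
    apply Submodule.span_le.mpr
    rintro x ⟨j, rfl⟩
    by_cases hj : j = j₀
    · subst hj; exact hmem
    · obtain ⟨a, ha⟩ := Fin.exists_succAbove_eq hj
      exact Submodule.subset_span ⟨a, by show Bᵀ (j₀.succAbove a) = Bᵀ j; rw [ha]⟩
  -- so they are linearly independent
  have hlicols : LinearIndependent K (fun a : Fin k => Bᵀ (j₀.succAbove a)) := by
    apply linearIndependent_of_top_le_span_of_card_eq_finrank hspan'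
    simp [Module.finrank_fintype_fun_eq_card]
  -- det of the square submatrix is nonzero
  have : LinearIndependent K (fun a => (B.submatrix id j₀.succAbove)ᵀ a) := by
    exact hlicols
  have hunit := Matrix.linearIndependent_cols_iff_isUnit.mp this
  intro hdet
  have := (Matrix.isUnit_iff_isUnit_det _).mp hunit
  rw [hdet] at this
  simp at this

/-- Siegel-type bound: a matrix with entries in `{-1, 0, 1}`, `n` columns and
rank `n - 1` has a nonzero integer kernel vector `h` with `‖h‖_∞ ≤ n^(n-1)`. -/
theorem siegel_kernel_bound (m n : ℕ) (hn : 0 < n) (M : Matrix (Fin m) (Fin n) ℤ)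
    (hentries : ∀ i j, |M i j| ≤ 1)
    (hrank : (M.map (Int.cast : ℤ → ℚ)).rank = n - 1) :
    ∃ h : Fin n → ℤ, h ≠ 0 ∧ M.mulVec h = 0 ∧ ∀ i, |h i| ≤ (n : ℤ) ^ (n - 1) := by
  classical
  obtain ⟨k, rfl⟩ : ∃ k, n = k + 1 := ⟨n - 1, by omega⟩
  simp only [Nat.add_sub_cancel] at hrank ⊢
  set A : Matrix (Fin m) (Fin (k+1)) ℚ := M.map (Int.cast) with hA
  have hspanrank : Module.finrank ℚ (span ℚ (Set.range A)) = k := by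
    exact (Matrix.rank_eq_finrank_span_row A).symm.trans hrank
  obtain ⟨b, hbsub, hbspan, hbli⟩ := exists_linearIndependent ℚ (Set.range A)
  have hbfin : b.Finite := hbli.setFinite
  haveI := hbfin.fintype
  have hcard : Fintype.card b = k := by
    have h1 := linearIndependent_iff_card_eq_finrank_span.mp hbli
    rwa [Subtype.range_coe, Set.finrank, hbspan, hspanrank] at h1
  let e : Fin k ≃ b := (Fintype.equivFinOfCardEq hcard).symm
  have hexists : ∀ x : b, ∃ i : Fin m, A i = (x : Fin (k+1) → ℚ) := fun x => hbsub x.2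
  choose f hf using hexists
  set g : Fin k → Fin m := fun a => f (e a) with hgdef
  have hg : ∀ a, A (g a) = ((e a : b) : Fin (k+1) → ℚ) := fun a => hf (e a)
  -- rows of B are linearly independent
  have hBli : LinearIndependent ℚ (fun a : Fin k => A (g a)) := by
    have heq : (fun a : Fin k => A (g a)) = (fun x : b => (x : Fin (k+1) → ℚ)) ∘ e := by
      funext a; exact hg a
    rw [heq]
    exact hbli.comp e e.injective
  -- the span of the rows of B
  have hWrank : Module.finrank ℚ (span ℚ b) = k := by rw [hbspan]; exact hspanrank
  have hWmem : ∀ i, A i ∈ span ℚ b := by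
    intro i; rw [hbspan]; exact Submodule.subset_span ⟨i, rfl⟩
  have hBmem : ∀ a : Fin k, A (g a) ∈ span ℚ b := by
    intro a; rw [hg a]; exact Submodule.subset_span (e a).2
  -- the square integer matrices
  set Z : Fin m → Matrix (Fin (k+1)) (Fin (k+1)) ℤ :=
    fun i => Matrix.of (Fin.cons (M i) (fun a => M (g a))) with hZdef
  have hZdet : ∀ i, (Z i).det = 0 := by
    intro i
    have hmap : ((Z i).map (Int.cast : ℤ → ℚ)).det = 0 := by
      apply det_eq_zero_of_rows_mem _ (span ℚ b) (le_of_eq hWrank)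
      intro r
      refine Fin.cases ?_ ?_ r
      · have h0 : ((Z i).map (Int.cast : ℤ → ℚ)) 0 = A i := by
          funext j; simp [hZdef, hA, Matrix.map_apply]
        rw [h0]; exact hWmem i
      · intro a
        have hs : ((Z i).map (Int.cast : ℤ → ℚ)) a.succ = A (g a) := by
          funext j; simp [hZdef, hA, Matrix.map_apply]
        rw [hs]; exact hBmem a
    have hcast : (((Z i).det : ℤ) : ℚ) = ((Z i).map (Int.cast : ℤ → ℚ)).det := by
      simpa using (Int.castRingHom ℚ).map_det (Z i)
    rw [← hcast] at hmap
    exact_mod_cast hmap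
  -- the kernel vector
  set h : Fin (k+1) → ℤ :=
    fun j => (-1) ^ (j : ℕ) * (Matrix.of (fun a b => M (g a) (j.succAbove b))).det with hhdef
  have hmul : ∀ i, M.mulVec h i = (Z i).det := by
    intro i
    rw [Matrix.det_succ_row_zero]
    rw [Matrix.mulVec, dotProduct]
    apply Finset.sum_congr rfl
    intro j _
    have hsub : (Z i).submatrix Fin.succ j.succAbove
        = Matrix.of (fun a b => M (g a) (j.succAbove b)) := by
      ext a c; simp [hZdef]
    have h0 : Z i 0 j = M i j := by simp [hZdef]
    rw [hsub, h0, hhdef]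
    ring
  refine ⟨h, ?_, ?_, ?_⟩
  · -- nonzero
    obtain ⟨j₀, hj₀⟩ := exists_minor_ne_zero (Matrix.of (fun a j => A (g a) j)) (by exact hBli)
    intro hzero
    apply hj₀
    have hsub : (Matrix.of (fun a j => A (g a) j)).submatrix id j₀.succAbove
        = (Matrix.of (fun a c => M (g a) (j₀.succAbove c))).map (Int.cast : ℤ → ℚ) := by
      ext a c; simp [hA, Matrix.map_apply]
    rw [hsub]
    have hdet0 : (Matrix.of (fun a c => M (g a) (j₀.succAbove c))).det = 0 := by
      have hj0 : h j₀ = 0 := congrFun hzero j₀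
      simp only [hhdef] at hj0
      rcases mul_eq_zero.mp hj0 with h1 | h2
      · exact absurd h1 (pow_ne_zero _ (by norm_num))
      · exact h2
    have hcast : (((Matrix.of (fun a c => M (g a) (j₀.succAbove c))).det : ℤ) : ℚ)
        = ((Matrix.of (fun a c => M (g a) (j₀.succAbove c))).map (Int.cast : ℤ → ℚ)).det := by
      simpa using (Int.castRingHom ℚ).map_det (Matrix.of (fun a c => M (g a) (j₀.succAbove c)))
    rw [← hcast, hdet0]
    simp
  · -- kernel
    funext i
    rw [hmul i, hZdet i]; rfl
  · -- bound
    intro j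
    have hbd := Matrix.det_le (A := (Matrix.of (fun a c => M (g a) (j.succAbove c))))
      (abv := (AbsoluteValue.abs : AbsoluteValue ℤ ℤ)) (x := 1)
      (fun a c => by simpa using hentries (g a) (j.succAbove c))
    simp only [Fintype.card_fin, one_pow, nsmul_eq_mul, smul_eq_mul, mul_one, AbsoluteValue.abs_apply] at hbd
    have habs : |h j| = |(Matrix.of (fun a c => M (g a) (j.succAbove c))).det| := by
      rw [hhdef]
      rw [abs_mul, abs_pow, abs_neg, abs_one, one_pow, one_mul]
    rw [habs]
    refine hbd.trans ?_
    have hfact : Nat.factorial k ≤ (k+1) ^ k :=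
      (Nat.factorial_le_pow k).trans (Nat.pow_le_pow_left (Nat.le_succ k) k)
    exact_mod_cast hfact
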